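/- arXiv:1204.2802 — 2 statements merged into one kernel-verified Lean document; each statement's English description precedes it below -/
import Mathlib

section
/- Let M be a smooth manifold, G a Lie group acting smoothly on M (i.e. the map G × M → M, (s,p) ↦ s • p, is smooth), and f : M → ℝ a smooth function. Define F : M × G → ℝ by F(p,s) = f(s • p). Then for every (p,s) ∈ M × G, the differential of F vanishes at (p,s) if and only if the differential of f vanishes at s • p; equivalently, the critical set of F is exactly {(p,s) ∈ M × G : s • p is a critical point of f}. -/
open Manifold

/-- The critical set of the twisted function `F(p,s) = f(s • p)` on `M × G`:
`dF` vanishes at `(p,s)` iff `df` vanishes at `s • p`. -/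
theorem stmt_0
    {E : Type*} [NormedAddCommGroup E] [NormedSpace ℝ E]
    {H : Type*} [TopologicalSpace H] (I : ModelWithCorners ℝ E H)
    {M : Type*} [TopologicalSpace M] [ChartedSpace H M] [IsManifold I (⊤ : ℕ∞) M]
    {E' : Type*} [NormedAddCommGroup E'] [NormedSpace ℝ E']
    {H' : Type*} [TopologicalSpace H'] (I' : ModelWithCorners ℝ E' H')
    {G : Type*} [TopologicalSpace G] [ChartedSpace H' G] [Group G] [LieGroup I' (⊤ : ℕ∞) G]
    [MulAction G M]
    (hact : ContMDiff (I'.prod I) I (⊤ : ℕ∞) (fun q : G × M => q.1 • q.2))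
    (f : M → ℝ) (hf : ContMDiff I 𝓘(ℝ, ℝ) (⊤ : ℕ∞) f) :
    ∀ (p : M) (s : G),
      mfderiv (I.prod I') 𝓘(ℝ, ℝ) (fun q : M × G => f (q.2 • q.1)) (p, s) = 0 ↔
        mfderiv I 𝓘(ℝ, ℝ) f (s • p) = 0 := by
  intro p s
  have hφ : ContMDiff (I.prod I') I (⊤ : ℕ∞) (fun q : M × G => q.2 • q.1) :=
    hact.comp (contMDiff_snd.prodMk contMDiff_fst)
  have hsmul : ∀ a : G, ContMDiff I I (⊤ : ℕ∞) (fun x : M => a • x) := fun a =>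
    hact.comp (contMDiff_const.prodMk contMDiff_id)
  constructor
  · intro h
    have hι : ContMDiff I (I.prod I') (⊤ : ℕ∞) (fun x : M => (x, s)) :=
      contMDiff_id.prodMk contMDiff_const
    have hg : ContMDiff I 𝓘(ℝ, ℝ) (⊤ : ℕ∞) (fun x : M => f (s • x)) := hf.comp (hsmul s)
    have hdg : mfderiv I 𝓘(ℝ, ℝ) (fun x : M => f (s • x)) p = 0 := by
      have hcomp : (fun x : M => f (s • x)) =
          (fun q : M × G => f (q.2 • q.1)) ∘ (fun x : M => (x, s)) := rfl
      have hF : MDifferentiableAt (I.prod I') 𝓘(ℝ, ℝ)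
          (fun q : M × G => f (q.2 • q.1)) (p, s) :=
        (hf.comp hφ).mdifferentiableAt (by simp)
      rw [hcomp, mfderiv_comp p hF (hι.mdifferentiableAt (by simp))]
      have : mfderiv (I.prod I') 𝓘(ℝ, ℝ) (fun q : M × G => f (q.2 • q.1))
          ((fun x : M => (x, s)) p) = 0 := h
      rw [this]
      exact ContinuousLinearMap.zero_comp _
    have hfe : f = (fun x : M => f (s • x)) ∘ (fun x : M => s⁻¹ • x) := by
      funext x; simp [smul_inv_smul]
    rw [hfe, mfderiv_comp (s • p) ?_ ((hsmul s⁻¹).mdifferentiableAt (by simp))]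
    · rw [show s⁻¹ • s • p = p from inv_smul_smul s p, hdg]
      exact ContinuousLinearMap.zero_comp _
    · rw [show s⁻¹ • s • p = p from inv_smul_smul s p]
      exact hg.mdifferentiableAt (by simp)
  · intro h
    have hcomp : (fun q : M × G => f (q.2 • q.1)) =
        f ∘ (fun q : M × G => q.2 • q.1) := rfl
    rw [hcomp, mfderiv_comp (p, s) (hf.mdifferentiableAt (by simp))
      (hφ.mdifferentiableAt (by simp))]
    have : mfderiv I 𝓘(ℝ, ℝ) f ((fun q : M × G => q.2 • q.1) (p, s)) = 0 := h
    rw [this]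
    exact ContinuousLinearMap.zero_comp _
end

section
/- Let E be a real Hilbert space, f : E → ℝ a continuously differentiable function, and u : ℝ → E a differentiable curve satisfying u'(t) = gradient f (u(t)) for all t ∈ ℝ. If u(t) converges to a point x ∈ E as t → +∞, then gradient f x = 0, i.e. the limit x is a critical point of f. -/
open Filter InnerProductSpace

/-- The asymptotic limit as `t → +∞` of a gradient flow line `u' = ∇f(u)` of a
continuously differentiable function `f` is a critical point of `f`. -/
theorem stmt_14 {E : Type*}
    [NormedAddCommGroup E] [InnerProductSpace ℝ E] [CompleteSpace E]
    (f : E → ℝ) (hf : ContDiff ℝ 1 f)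
    (u : ℝ → E) (hu : ∀ t : ℝ, HasDerivAt u (gradient f (u t)) t)
    (x : E) (hx : Filter.Tendsto u Filter.atTop (nhds x)) :
    gradient f x = 0 := by
  by_contra hne
  -- the gradient map is continuous
  have hgradcont : Continuous (gradient f) := by
    have : Continuous (fun y => fderiv ℝ f y) := hf.continuous_fderiv one_ne_zero
    exact (toDual ℝ E).symm.continuous.comp this
  -- derivative of f ∘ u
  have hg : ∀ t : ℝ, HasDerivAt (fun s => f (u s))
      (‖gradient f (u t)‖ ^ 2) t := by
    intro t
    have hfd : HasFDerivAt f (fderiv ℝ f (u t)) (u t) :=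
      ((hf.differentiable one_ne_zero) (u t)).hasFDerivAt
    have := hfd.comp_hasDerivAt t (hu t)
    have heq : fderiv ℝ f (u t) (gradient f (u t))
        = ‖gradient f (u t)‖ ^ 2 := by
      have h2 := ((hf.differentiable one_ne_zero) (u t)).hasGradientAt
      rw [hasGradientAt_iff_hasFDerivAt] at h2
      rw [h2.fderiv, toDual_apply_apply, real_inner_self_eq_norm_sq]
    rwa [heq] at this
  set c : ℝ := ‖gradient f x‖ with hc
  have hcpos : 0 < c := norm_pos_iff.2 hne
  -- eventually ‖gradient f (u t)‖ ≥ c/2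
  have hev : ∀ᶠ t in atTop, c / 2 ≤ ‖gradient f (u t)‖ := by
    have : Tendsto (fun t => ‖gradient f (u t)‖) atTop (nhds c) :=
      (hgradcont.norm.continuousAt.tendsto).comp hx
    exact this.eventually (eventually_ge_nhds (by linarith))
  obtain ⟨T, hT⟩ := hev.exists_forall_of_atTop
  -- on [T, ∞), derivative of g is at least (c/2)^2
  set K : ℝ := (c / 2) ^ 2 with hK
  have hKpos : 0 < K := by positivity
  have key : ∀ t ≥ T, K * (t - T) ≤ f (u t) - f (u T) := by
    intro t ht
    refine (convex_Ici T).mul_sub_le_image_sub_of_le_deriv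
      (continuous_iff_continuousAt.2 fun s => (hg s).continuousAt).continuousOn
      (fun s _ => ((hg s).differentiableAt).differentiableWithinAt)
      ?_ T (le_refl T) t ht ht
    intro s hs
    rw [interior_Ici] at hs
    rw [(hg s).deriv]
    have := hT s (le_of_lt hs)
    calc K = (c/2)^2 := rfl
      _ ≤ ‖gradient f (u s)‖ ^ 2 := pow_le_pow_left₀ (by positivity) this 2
    -- side goals handled
  -- f(u t) → f x, but key forces it to atTop
  have hlim : Tendsto (fun t => f (u t)) atTop (nhds (f x)) :=
    ((hf.continuous.continuousAt).tendsto).comp hx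
  have htop : Tendsto (fun t => f (u t)) atTop atTop := by
    apply tendsto_atTop_mono' _ _ (tendsto_atTop_add_const_right _ (f (u T))
      ((tendsto_atTop_add_const_right _ (-T) tendsto_id).const_mul_atTop hKpos))
    filter_upwards [eventually_ge_atTop T] with t ht
    have := key t ht
    simp only [id]
    nlinarith
  exact not_tendsto_atTop_of_tendsto_nhds hlim htop
end
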